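/- arXiv:1209.5623 — 2 statements merged into one kernel-verified Lean document; each statement's English description precedes it below -/
import Mathlib

section
/- Let n ≥ 2, let u : ℝⁿ → ℝⁿ be a Schwartz vector field with ∇·u = 0 everywhere, and let d : ℝⁿ → ℝ³ be smooth with ∇d a Schwartz function. Then ∫_{ℝⁿ} Δ(u·∇d)·Δd dx = Σ_{i=1}^n Σ_{k=1}^3 ∫_{ℝⁿ} ∂_i d_k Δd_k Δu_i dx + 2 Σ_{i,j=1}^n Σ_{k=1}^3 ∫_{ℝⁿ} ∂_i u_j ∂_i∂_j d_k Δd_k dx. In particular the transport contribution ∫ (u·∇)Δd·Δd dx vanishes. -/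
open MeasureTheory Real

noncomputable section

/-- `pd i f x` is the `i`-th partial derivative `∂ᵢ f (x)` of `f : ℝⁿ → ℝ`. -/
def pd {n : ℕ} (i : Fin n) (f : EuclideanSpace ℝ (Fin n) → ℝ)
    (x : EuclideanSpace ℝ (Fin n)) : ℝ :=
  fderiv ℝ f x (EuclideanSpace.single i 1)

/-- `lap f x` is the Laplacian `Δf(x) = Σᵢ ∂ᵢ∂ᵢ f (x)`. -/
def lap {n : ℕ} (f : EuclideanSpace ℝ (Fin n) → ℝ)
    (x : EuclideanSpace ℝ (Fin n)) : ℝ :=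
  ∑ i, pd i (fun y => pd i f y) x

namespace Statement9Aux

open SchwartzMap

variable {n : ℕ}

local notation "E" => EuclideanSpace ℝ (Fin n)

/-- Partial derivative of a Schwartz map, as a Schwartz map. -/
def Dp (i : Fin n) (f : 𝓢(E, ℝ)) : 𝓢(E, ℝ) := LineDeriv.lineDerivOpCLM ℝ 𝓢(E, ℝ) (EuclideanSpace.single i (1 : ℝ)) f

lemma Dp_apply (i : Fin n) (f : 𝓢(E, ℝ)) (x : E) :
    Dp i f x = fderiv ℝ f x (EuclideanSpace.single i 1) := rfl

lemma pd_coe (i : Fin n) (f : 𝓢(E, ℝ)) : pd i ⇑f = ⇑(Dp i f) := rfl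

lemma htg (f : 𝓢(E, ℝ)) : Function.HasTemperateGrowth ⇑f := by
  refine ⟨f.smooth ⊤, fun m => ⟨0, SchwartzMap.seminorm ℝ 0 m f, fun x => ?_⟩⟩
  simpa using norm_iteratedFDeriv_le_seminorm ℝ f m x

/-- product of two Schwartz maps -/
def mulS (f g : 𝓢(E, ℝ)) : 𝓢(E, ℝ) :=
  bilinLeftCLM (ContinuousLinearMap.mul ℝ ℝ) (htg g) f

lemma mulS_apply (f g : 𝓢(E, ℝ)) (x : E) : mulS f g x = f x * g x := rfl

lemma coe_sum {ι : Type*} (s : Finset ι) (F : ι → 𝓢(E, ℝ)) (x : E) :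
    (∑ i ∈ s, F i) x = ∑ i ∈ s, F i x := by
  have : ⇑(∑ i ∈ s, F i) = ∑ i ∈ s, ⇑(F i) := by funext y; simp
  rw [this, Finset.sum_apply]

/-- symmetry of second partials for smooth functions -/
lemma pd_swap {f : E → ℝ} (hf : ContDiff ℝ (⊤ : ℕ∞) f) (a b : Fin n) :
    pd a (pd b f) = pd b (pd a f) := by
  funext x
  have hsymm : IsSymmSndFDerivAt ℝ f x :=
    (hf.contDiffAt).isSymmSndFDerivAt (by simp [minSmoothness_of_isRCLikeNormedField]; exact WithTop.coe_le_coe.mpr le_top)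
  have hdf : DifferentiableAt ℝ (fderiv ℝ f) x := by
    have h2 : ContDiffAt ℝ ((2 : ℕ) : WithTop ℕ∞) f x :=
      hf.contDiffAt.of_le (WithTop.coe_le_coe.mpr le_top)
    have h3 := h2.fderiv_right (m := 1) (by norm_num)
    exact h3.differentiableAt (by norm_num)
  have key : ∀ v : E, fderiv ℝ (fun y => fderiv ℝ f y v) x
      = (fderiv ℝ (fderiv ℝ f) x).flip v := by
    intro v
    rw [fderiv_clm_apply hdf (differentiableAt_const v)]
    simp
  show fderiv ℝ (fun y => fderiv ℝ f y (EuclideanSpace.single b 1)) x (EuclideanSpace.single a 1)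
    = fderiv ℝ (fun y => fderiv ℝ f y (EuclideanSpace.single a 1)) x (EuclideanSpace.single b 1)
  rw [key, key]
  exact hsymm _ _

lemma Dp_mul (j : Fin n) (f g : 𝓢(E, ℝ)) :
    Dp j (mulS f g) = mulS (Dp j f) g + mulS f (Dp j g) := by
  ext x
  have hco : ⇑(mulS f g) = fun y => f y * g y := rfl
  have h := fderiv_fun_mul (𝕜 := ℝ) (x := x) f.differentiableAt g.differentiableAt
  rw [SchwartzMap.add_apply, mulS_apply, mulS_apply, Dp_apply, Dp_apply, Dp_apply, hco, h]
  simp [smul_eq_mul]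
  ring

/-- Laplacian of a Schwartz map, as a Schwartz map. -/
def lapS (f : 𝓢(E, ℝ)) : 𝓢(E, ℝ) := ∑ j, Dp j (Dp j f)

lemma lap_coe (f : 𝓢(E, ℝ)) : lap ⇑f = ⇑(lapS f) := by
  funext x
  rw [lapS, coe_sum, lap]
  rfl

end Statement9Aux

namespace Statement9Aux

open SchwartzMap

variable {n : ℕ}

local notation "E" => EuclideanSpace ℝ (Fin n)

lemma Dp_add (j : Fin n) (a b : 𝓢(E, ℝ)) : Dp j (a + b) = Dp j a + Dp j b :=
  map_add (LineDeriv.lineDerivOpCLM ℝ 𝓢(E, ℝ) (EuclideanSpace.single j (1 : ℝ))) a b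

lemma Dp_comm (a b : Fin n) (h : 𝓢(E, ℝ)) : Dp a (Dp b h) = Dp b (Dp a h) := by
  ext x
  exact congrFun (pd_swap (h.smooth ⊤) a b) x

lemma lapS_sum {ι : Type*} (s : Finset ι) (h : ι → 𝓢(E, ℝ)) :
    lapS (∑ i ∈ s, h i) = ∑ i ∈ s, lapS (h i) := by
  simp only [lapS, Dp, map_sum]
  exact Finset.sum_comm

lemma lapS_mul (f g : 𝓢(E, ℝ)) (x : E) :
    lapS (mulS f g) x = lapS f x * g x + 2 * ∑ j, Dp j f x * Dp j g x + f x * lapS g x := by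
  have h1 : ∀ j : Fin n, Dp j (Dp j (mulS f g)) x
      = Dp j (Dp j f) x * g x + 2 * (Dp j f x * Dp j g x) + f x * Dp j (Dp j g) x := by
    intro j
    rw [Dp_mul, Dp_add, Dp_mul, Dp_mul]
    simp only [SchwartzMap.add_apply, mulS_apply]
    ring
  rw [lapS, coe_sum, Finset.sum_congr rfl (fun j _ => h1 j), Finset.sum_add_distrib,
    Finset.sum_add_distrib, ← Finset.sum_mul, ← Finset.mul_sum, ← Finset.mul_sum,
    lapS, coe_sum, lapS, coe_sum]

lemma intS3 (f g h : 𝓢(E, ℝ)) : Integrable (fun x => f x * g x * h x) volume :=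
  (mulS (mulS f g) h).integrable

end Statement9Aux

open Statement9Aux SchwartzMap

/-- ∫ Δ(u·∇d)·Δd = Σ∫ ∂ᵢd_k Δd_k Δuᵢ + 2Σ∫ ∂ᵢu_j ∂ᵢ∂_j d_k Δd_k,
and the transport contribution ∫ (u·∇)Δd·Δd vanishes. -/
theorem statement9 {n : ℕ} (hn : 2 ≤ n)
    (u : SchwartzMap (EuclideanSpace ℝ (Fin n)) (EuclideanSpace ℝ (Fin n)))
    (hdiv : ∀ x, ∑ i, pd i (fun y => u y i) x = 0)
    (d : EuclideanSpace ℝ (Fin n) → EuclideanSpace ℝ (Fin 3))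
    (hd : ContDiff ℝ (⊤ : ℕ∞) d)
    (hgrad : ∀ (i : Fin n) (k : Fin 3),
      ∃ g : SchwartzMap (EuclideanSpace ℝ (Fin n)) ℝ,
        ∀ x, g x = pd i (fun z => d z k) x) :
    ((∫ x, ∑ k : Fin 3, lap (fun y => ∑ i, u y i * pd i (fun z => d z k) y) x
          * lap (fun z => d z k) x)
      = (∑ i, ∑ k : Fin 3,
          ∫ x, pd i (fun z => d z k) x * lap (fun z => d z k) x * lap (fun y => u y i) x)
        + 2 * ∑ i, ∑ j, ∑ k : Fin 3,
            ∫ x, pd i (fun y => u y j) x * pd i (pd j (fun z => d z k)) x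
              * lap (fun z => d z k) x) ∧
    (∫ x, ∑ k : Fin 3, (∑ i, u x i * pd i (lap (fun z => d z k)) x)
        * lap (fun z => d z k) x) = 0 := by
  classical
  choose g hg using hgrad
  -- Schwartz components of u
  set uc : Fin n → 𝓢(EuclideanSpace ℝ (Fin n), ℝ) := fun i =>
    SchwartzMap.bilinLeftCLM ((ContinuousLinearMap.mul ℝ ℝ).comp (EuclideanSpace.proj i))
      (Function.HasTemperateGrowth.const (1 : ℝ)) u with huc_def
  have hux : ∀ (x : EuclideanSpace ℝ (Fin n)) (i : Fin n), u x i = uc i x := by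
    intro x i
    exact (mul_one (u x i)).symm
  have huc : ∀ i, (fun y => u y i) = ⇑(uc i) := by
    intro i; funext y; exact hux y i
  have hucpd : ∀ i, (fun y => pd i (fun z => u z i) y) = ⇑(Dp i (uc i)) := by
    intro i; rw [← pd_coe, huc i]
  -- gradient components as Schwartz maps, at function level
  have hgc : ∀ (i : Fin n) (k : Fin 3), pd i (fun z => d z k) = ⇑(g i k) :=
    fun i k => funext fun x => (hg i k x).symm
  -- the Laplacians of the d-components, as Schwartz maps
  set hkS : Fin 3 → 𝓢(EuclideanSpace ℝ (Fin n), ℝ) := fun k => ∑ j, Dp j (g j k) with hk_def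
  have hlapd : ∀ k, lap (fun z => d z k) = ⇑(hkS k) := by
    intro k
    funext x
    rw [lap, hk_def, coe_sum]
    refine Finset.sum_congr rfl fun j _ => ?_
    rw [hgc j k]
    rfl
  -- smoothness of components of d
  have hdsm : ∀ k : Fin 3, ContDiff ℝ (⊤ : ℕ∞) (fun z => d z k) :=
    fun k => (EuclideanSpace.proj (𝕜 := ℝ) k).contDiff.comp hd
  -- symmetry of second derivatives, Schwartz level
  have hDg_symm : ∀ (i j : Fin n) (k : Fin 3), Dp j (g i k) = Dp i (g j k) := by
    intro i j k
    ext x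
    have h := congrFun (pd_swap (hdsm k) j i) x
    rw [← pd_coe, ← pd_coe, ← hgc i k, ← hgc j k]
    exact h
  -- Laplacian of gradient component = derivative of Laplacian
  have hlapg : ∀ (i : Fin n) (k : Fin 3), lapS (g i k) = Dp i (hkS k) := by
    intro i k
    have h1 : ∀ j : Fin n, Dp j (Dp j (g i k)) = Dp i (Dp j (g j k)) := by
      intro j
      rw [hDg_symm i j k, Dp_comm j i]
    rw [lapS, Finset.sum_congr rfl (fun j _ => h1 j), hk_def, Dp, map_sum]
    rfl
  -- divergence-free at Schwartz level
  have hdiv' : ∀ x, ∑ i, Dp i (uc i) x = 0 := by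
    intro x
    rw [← hdiv x]
    exact Finset.sum_congr rfl fun i _ => (congrFun (hucpd i) x).symm
  -- the transport term vanishes
  have key0 : ∀ k : Fin 3, ∑ i, (∫ x, uc i x * Dp i (hkS k) x * hkS k x) = 0 := by
    intro k
    set q : 𝓢(EuclideanSpace ℝ (Fin n), ℝ) := mulS (hkS k) (hkS k) with hq_def
    have hIBP : ∀ i : Fin n, (∫ x, uc i x * Dp i q x) = - ∫ x, Dp i (uc i) x * q x := by
      intro i
      exact integral_mul_fderiv_eq_neg_fderiv_mul_of_integrable (v := EuclideanSpace.single i 1)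
        (mulS (Dp i (uc i)) q).integrable (mulS (uc i) (Dp i q)).integrable
        (mulS (uc i) q).integrable (fun x _ => (uc i).differentiableAt) (fun x _ => q.differentiableAt)
    have h2 : ∀ i : Fin n, (∫ x, uc i x * Dp i q x)
        = 2 * ∫ x, uc i x * Dp i (hkS k) x * hkS k x := by
      intro i
      rw [← integral_const_mul]
      congr 1
      funext x
      rw [hq_def, Dp_mul]
      simp only [SchwartzMap.add_apply, mulS_apply]
      ring
    have h3 : 2 * ∑ i, (∫ x, uc i x * Dp i (hkS k) x * hkS k x) = 0 := by
      rw [Finset.mul_sum]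
      calc ∑ i, 2 * (∫ x, uc i x * Dp i (hkS k) x * hkS k x)
          = ∑ i, (∫ x, uc i x * Dp i q x) := by
            exact Finset.sum_congr rfl fun i _ => (h2 i).symm
        _ = ∑ i, - ∫ x, Dp i (uc i) x * q x := Finset.sum_congr rfl fun i _ => hIBP i
        _ = - ∑ i, ∫ x, Dp i (uc i) x * q x := by rw [Finset.sum_neg_distrib]
        _ = - ∫ x, ∑ i, Dp i (uc i) x * q x :=
            congrArg Neg.neg
              (integral_finset_sum Finset.univ
                (fun i _ => (mulS (Dp i (uc i)) q).integrable)).symm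
        _ = 0 := by
            rw [neg_eq_zero]
            have : (fun x => ∑ i, Dp i (uc i) x * q x) = fun _ => (0 : ℝ) := by
              funext x
              rw [← Finset.sum_mul, hdiv' x, zero_mul]
            rw [this, integral_zero]
    linarith
  constructor
  · -- first conjunct
    set F : Fin 3 → 𝓢(EuclideanSpace ℝ (Fin n), ℝ) :=
      fun k => ∑ i, mulS (uc i) (g i k) with hF_def
    have hFc : ∀ k, (fun y => ∑ i, u y i * pd i (fun z => d z k) y) = ⇑(F k) := by
      intro k
      funext y
      rw [hF_def, coe_sum]
      refine Finset.sum_congr rfl fun i _ => ?_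
      rw [hux y i, hgc i k]
      rfl
    have hint : ∀ (k : Fin 3) x, lap (⇑(F k)) x * hkS k x
        = ∑ i, (lapS (uc i) x * g i k x * hkS k x
            + 2 * ∑ j, Dp j (uc i) x * Dp j (g i k) x * hkS k x
            + uc i x * Dp i (hkS k) x * hkS k x) := by
      intro k x
      rw [lap_coe, hF_def, lapS_sum, coe_sum, Finset.sum_mul]
      refine Finset.sum_congr rfl fun i _ => ?_
      rw [← hlapg i k]
      have hs : ∑ j, Dp j (uc i) x * Dp j (g i k) x * hkS k x
          = (∑ j, Dp j (uc i) x * Dp j (g i k) x) * hkS k x := (Finset.sum_mul _ _ _).symm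
      rw [lapS_mul, hs]
      ring
    have hintg : ∀ (k : Fin 3) (i : Fin n),
        Integrable (fun x => lapS (uc i) x * g i k x * hkS k x
            + 2 * ∑ j, Dp j (uc i) x * Dp j (g i k) x * hkS k x
            + uc i x * Dp i (hkS k) x * hkS k x) volume :=
      fun k i => ((intS3 (lapS (uc i)) (g i k) (hkS k)).add
          ((integrable_finset_sum Finset.univ
            (fun j _ => intS3 (Dp j (uc i)) (Dp j (g i k)) (hkS k))).const_mul 2)).add
        (intS3 (uc i) (Dp i (hkS k)) (hkS k))
    have hRHS1 : ∀ (i : Fin n) (k : Fin 3),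
        (∫ x, pd i (fun z => d z k) x * lap (fun z => d z k) x * lap (fun y => u y i) x)
          = ∫ x, lapS (uc i) x * g i k x * hkS k x := by
      intro i k
      congr 1
      funext x
      rw [hgc i k, hlapd k, huc i, lap_coe]
      ring
    have hRHS2 : ∀ (i j : Fin n) (k : Fin 3),
        (∫ x, pd i (fun y => u y j) x * pd i (pd j (fun z => d z k)) x
            * lap (fun z => d z k) x)
          = ∫ x, Dp i (uc j) x * Dp i (g j k) x * hkS k x := by
      intro i j k
      congr 1
      funext x
      rw [huc j, hgc j k, hlapd k, pd_coe, pd_coe]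
    have target : (∫ x, ∑ k : Fin 3,
          lap (fun y => ∑ i, u y i * pd i (fun z => d z k) y) x * lap (fun z => d z k) x)
        = (∑ k : Fin 3, ∑ i, ∫ x, lapS (uc i) x * g i k x * hkS k x)
          + 2 * ∑ k : Fin 3, ∑ i, ∑ j, ∫ x, Dp j (uc i) x * Dp j (g i k) x * hkS k x := by
      calc (∫ x, ∑ k : Fin 3,
            lap (fun y => ∑ i, u y i * pd i (fun z => d z k) y) x * lap (fun z => d z k) x)
          = ∫ x, ∑ k : Fin 3, ∑ i, (lapS (uc i) x * g i k x * hkS k x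
              + 2 * ∑ j, Dp j (uc i) x * Dp j (g i k) x * hkS k x
              + uc i x * Dp i (hkS k) x * hkS k x) := by
            congr 1
            funext x
            refine Finset.sum_congr rfl fun k _ => ?_
            rw [hFc k, hlapd k]
            exact hint k x
        _ = ∑ k : Fin 3, ∫ x, ∑ i, (lapS (uc i) x * g i k x * hkS k x
              + 2 * ∑ j, Dp j (uc i) x * Dp j (g i k) x * hkS k x
              + uc i x * Dp i (hkS k) x * hkS k x) :=
            integral_finset_sum Finset.univ fun k _ =>
              integrable_finset_sum Finset.univ fun i _ => hintg k i
        _ = ∑ k : Fin 3, ∑ i, ∫ x, (lapS (uc i) x * g i k x * hkS k x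
              + 2 * ∑ j, Dp j (uc i) x * Dp j (g i k) x * hkS k x
              + uc i x * Dp i (hkS k) x * hkS k x) :=
            Finset.sum_congr rfl fun k _ =>
              integral_finset_sum Finset.univ fun i _ => hintg k i
        _ = ∑ k : Fin 3, ∑ i, ((∫ x, lapS (uc i) x * g i k x * hkS k x)
              + 2 * ∑ j, (∫ x, Dp j (uc i) x * Dp j (g i k) x * hkS k x)
              + ∫ x, uc i x * Dp i (hkS k) x * hkS k x) := by
            refine Finset.sum_congr rfl fun k _ => Finset.sum_congr rfl fun i _ => ?_
            have h1 := intS3 (lapS (uc i)) (g i k) (hkS k)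
            have h2 : Integrable
                (fun x => 2 * ∑ j, Dp j (uc i) x * Dp j (g i k) x * hkS k x) volume :=
              (integrable_finset_sum Finset.univ
                (fun j _ => intS3 (Dp j (uc i)) (Dp j (g i k)) (hkS k))).const_mul 2
            have h3 := intS3 (uc i) (Dp i (hkS k)) (hkS k)
            have hB : (∫ x, 2 * ∑ j, Dp j (uc i) x * Dp j (g i k) x * hkS k x)
                = 2 * ∑ j, ∫ x, Dp j (uc i) x * Dp j (g i k) x * hkS k x := by
              rw [integral_const_mul]
              exact congrArg (HMul.hMul (2:ℝ)) (integral_finset_sum Finset.univ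
                (fun j _ => intS3 (Dp j (uc i)) (Dp j (g i k)) (hkS k)))
            calc ∫ x, (lapS (uc i) x * g i k x * hkS k x
                  + 2 * ∑ j, Dp j (uc i) x * Dp j (g i k) x * hkS k x
                  + uc i x * Dp i (hkS k) x * hkS k x)
                = (∫ x, (lapS (uc i) x * g i k x * hkS k x
                    + 2 * ∑ j, Dp j (uc i) x * Dp j (g i k) x * hkS k x))
                  + ∫ x, uc i x * Dp i (hkS k) x * hkS k x :=
                  integral_add (h1.add h2) h3
              _ = ((∫ x, lapS (uc i) x * g i k x * hkS k x)
                    + ∫ x, 2 * ∑ j, Dp j (uc i) x * Dp j (g i k) x * hkS k x)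
                  + ∫ x, uc i x * Dp i (hkS k) x * hkS k x :=
                  congrArg (fun r => r + ∫ x, uc i x * Dp i (hkS k) x * hkS k x)
                    (integral_add h1 h2)
              _ = ((∫ x, lapS (uc i) x * g i k x * hkS k x)
                    + 2 * ∑ j, ∫ x, Dp j (uc i) x * Dp j (g i k) x * hkS k x)
                  + ∫ x, uc i x * Dp i (hkS k) x * hkS k x := by rw [hB]
        _ = (∑ k : Fin 3, ∑ i, ∫ x, lapS (uc i) x * g i k x * hkS k x)
              + (∑ k : Fin 3, ∑ i, 2 * ∑ j, (∫ x, Dp j (uc i) x * Dp j (g i k) x * hkS k x))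
              + ∑ k : Fin 3, ∑ i, ∫ x, uc i x * Dp i (hkS k) x * hkS k x := by
            rw [← Finset.sum_add_distrib, ← Finset.sum_add_distrib]
            exact Finset.sum_congr rfl fun k _ => by
              rw [← Finset.sum_add_distrib, ← Finset.sum_add_distrib]
        _ = (∑ k : Fin 3, ∑ i, ∫ x, lapS (uc i) x * g i k x * hkS k x)
              + 2 * ∑ k : Fin 3, ∑ i, ∑ j, ∫ x, Dp j (uc i) x * Dp j (g i k) x * hkS k x := by
            rw [Finset.sum_congr rfl fun k (_ : k ∈ Finset.univ) => key0 k]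
            simp only [Finset.sum_const_zero, add_zero]
            congr 1
            rw [Finset.mul_sum]
            exact Finset.sum_congr rfl fun k _ => by rw [Finset.mul_sum]
    rw [target]
    congr 1
    · rw [Finset.sum_comm]
      exact Finset.sum_congr rfl fun i _ => Finset.sum_congr rfl fun k _ => (hRHS1 i k).symm
    · congr 1
      calc ∑ k : Fin 3, ∑ a, ∑ b, (∫ x, Dp b (uc a) x * Dp b (g a k) x * hkS k x)
          = ∑ k : Fin 3, ∑ b, ∑ a, (∫ x, Dp b (uc a) x * Dp b (g a k) x * hkS k x) :=
            Finset.sum_congr rfl fun k _ => Finset.sum_comm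
        _ = ∑ b, ∑ k : Fin 3, ∑ a, (∫ x, Dp b (uc a) x * Dp b (g a k) x * hkS k x) :=
            Finset.sum_comm
        _ = ∑ b, ∑ a, ∑ k : Fin 3, (∫ x, Dp b (uc a) x * Dp b (g a k) x * hkS k x) :=
            Finset.sum_congr rfl fun b _ => Finset.sum_comm
        _ = ∑ i, ∑ j, ∑ k : Fin 3,
              (∫ x, pd i (fun y => u y j) x * pd i (pd j (fun z => d z k)) x
                * lap (fun z => d z k) x) :=
            Finset.sum_congr rfl fun i _ => Finset.sum_congr rfl fun j _ =>
              Finset.sum_congr rfl fun k _ => (hRHS2 i j k).symm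
  · -- second conjunct
    have hconv : ∀ (k : Fin 3) (x : EuclideanSpace ℝ (Fin n)),
        (∑ i, u x i * pd i (lap (fun z => d z k)) x) * lap (fun z => d z k) x
          = ∑ i, uc i x * Dp i (hkS k) x * hkS k x := by
      intro k x
      rw [hlapd k, Finset.sum_mul]
      refine Finset.sum_congr rfl fun i _ => ?_
      rw [hux x i, pd_coe]
    calc ∫ x, ∑ k : Fin 3, (∑ i, u x i * pd i (lap (fun z => d z k)) x)
            * lap (fun z => d z k) x
        = ∫ x, ∑ k : Fin 3, ∑ i, uc i x * Dp i (hkS k) x * hkS k x := by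
          congr 1
          funext x
          exact Finset.sum_congr rfl fun k _ => hconv k x
      _ = ∑ k : Fin 3, ∫ x, ∑ i, uc i x * Dp i (hkS k) x * hkS k x :=
          integral_finset_sum Finset.univ fun k _ => integrable_finset_sum _
            fun i _ => intS3 (uc i) (Dp i (hkS k)) (hkS k)
      _ = ∑ k : Fin 3, ∑ i, ∫ x, uc i x * Dp i (hkS k) x * hkS k x :=
          Finset.sum_congr rfl fun k _ =>
            integral_finset_sum Finset.univ fun i _ => intS3 (uc i) (Dp i (hkS k)) (hkS k)
      _ = 0 := by
          rw [Finset.sum_congr rfl fun k _ => key0 k]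
          simp
end
end

section
/- Let a < b be real numbers, let A ≥ 0 and 0 < θ < 1, and let y : [a,b] → [0,∞) be differentiable with y'(t) ≤ A·(e + y(t))^θ for all t ∈ [a,b]. Then for every t ∈ [a,b], (e + y(t))^{1−θ} ≤ (e + y(a))^{1−θ} + (1−θ)·A·(t − a); in particular, y is bounded on [a,b] by a quantity depending only on y(a), A, θ, and b − a. -/
/-- Gronwall-type lemma with sublinear power right-hand side: if
y' (t) ≤ A (e + y t)^θ on [a,b] with 0 < θ < 1, then
(e + y t)^{1−θ} ≤ (e + y a)^{1−θ} + (1−θ) A (t − a) on [a,b]. -/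
theorem statement18 (a b A θ : ℝ) (hab : a < b) (hA : 0 ≤ A)
    (hθ0 : 0 < θ) (hθ1 : θ < 1) (y y' : ℝ → ℝ)
    (hy0 : ∀ t ∈ Set.Icc a b, 0 ≤ y t)
    (hy : ∀ t ∈ Set.Icc a b, HasDerivAt y (y' t) t)
    (hy' : ∀ t ∈ Set.Icc a b, y' t ≤ A * (Real.exp 1 + y t) ^ θ) :
    ∀ t ∈ Set.Icc a b,
      (Real.exp 1 + y t) ^ (1 - θ)
        ≤ (Real.exp 1 + y a) ^ (1 - θ) + (1 - θ) * A * (t - a) := by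
  set g : ℝ → ℝ := fun t => (Real.exp 1 + y t) ^ (1 - θ) with hg_def
  have hpos : ∀ t ∈ Set.Icc a b, 0 < Real.exp 1 + y t := fun t ht =>
    add_pos_of_pos_of_nonneg (Real.exp_pos 1) (hy0 t ht)
  have hg : ∀ t ∈ Set.Icc a b,
      HasDerivAt g ((1 - θ) * (Real.exp 1 + y t) ^ (-θ) * y' t) t := by
    intro t ht
    have h1 : HasDerivAt (fun s => Real.exp 1 + y s) (y' t) t := by
      exact (hy t ht).const_add (Real.exp 1)
    have h2 := (Real.hasDerivAt_rpow_const
      (x := Real.exp 1 + y t) (p := 1 - θ) (Or.inl (hpos t ht).ne')).comp t h1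
    have : (1 - θ : ℝ) - 1 = -θ := by ring
    simpa [this, mul_comm, mul_assoc, mul_left_comm] using h1.rpow_const (p := 1 - θ) (Or.inl (hpos t ht).ne')
  have hderiv_le : ∀ x ∈ interior (Set.Icc a b), deriv g x ≤ (1 - θ) * A := by
    intro x hx
    have hx' : x ∈ Set.Icc a b := interior_subset hx
    rw [(hg x hx').deriv]
    have hnn : 0 ≤ (1 - θ) * (Real.exp 1 + y x) ^ (-θ) :=
      mul_nonneg (by linarith) (Real.rpow_nonneg (hpos x hx').le _)
    calc (1 - θ) * (Real.exp 1 + y x) ^ (-θ) * y' x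
        ≤ (1 - θ) * (Real.exp 1 + y x) ^ (-θ) * (A * (Real.exp 1 + y x) ^ θ) :=
          mul_le_mul_of_nonneg_left (hy' x hx') hnn
      _ = (1 - θ) * A * ((Real.exp 1 + y x) ^ (-θ) * (Real.exp 1 + y x) ^ θ) := by ring
      _ = (1 - θ) * A := by
          rw [← Real.rpow_add (hpos x hx')]
          simp
  intro t ht
  have hcont : ContinuousOn g (Set.Icc a b) := fun x hx =>
    ((hg x hx).continuousAt).continuousWithinAt
  have hdiff : DifferentiableOn ℝ g (interior (Set.Icc a b)) := fun x hx =>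
    ((hg x (interior_subset hx)).differentiableAt).differentiableWithinAt
  have ha : a ∈ Set.Icc a b := Set.left_mem_Icc.2 hab.le
  have := (convex_Icc a b).image_sub_le_mul_sub_of_deriv_le hcont hdiff hderiv_le
    a ha t ht ht.1
  simpa [hg_def] using by linarith
end
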